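/- Let Γ be a profinite group, M a finite Γ-module with pM = 0, and let K be the kernel of the action map Γ → Aut(M), with G = Γ/K finite. Assume M is a simple G-module, H^1(G, M) = 0, and End_G(M) = F_q. Let α_1, ..., α_n ∈ H^1(Γ, M) be classes whose restrictions to K (continuous G-equivariant homomorphisms K → M) define a map α̃: K → M^n. If the classes α_1, ..., α_n are linearly independent over F_q in H^1(Γ, M), then the restriction map α̃ induces a surjection from K onto M^n. -/

import Mathlib

lemma stmt7_aux (Γ : Type*) [Group Γ] (M : Type*) [AddCommGroup M] [DistribMulAction Γ M]
    (K : Type*) [Field K] [Module K M]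
    (hsimple : ∀ N : AddSubgroup M, (∀ (g : Γ) (x : M), x ∈ N → g • x ∈ N) → N = ⊥ ∨ N = ⊤)
    (hend : ∀ f : M →+ M, (∀ (g : Γ) (x : M), f (g • x) = g • f x) → ∃ c : K, ∀ x, f x = c • x) :
    ∀ (n : ℕ) (N : AddSubgroup (Fin n → M)),
      (∀ (g : Γ) (v : Fin n → M), v ∈ N → (fun i => g • v i) ∈ N) →
      N = ⊤ ∨ ∃ c : Fin n → K, c ≠ 0 ∧ ∀ v ∈ N, ∑ i, c i • v i = 0 := by
  intro n
  induction n with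
  | zero =>
    intro N _
    left
    ext v
    simp only [AddSubgroup.mem_top, iff_true]
    have : v = 0 := Subsingleton.elim _ _
    rw [this]; exact N.zero_mem
  | succ n ih =>
    intro N hstab
    set proj : (Fin (n + 1) → M) →+ (Fin n → M) :=
      AddMonoidHom.mk' (fun v i => v i.succ) (fun a b => rfl) with hproj
    set N' : AddSubgroup (Fin n → M) := N.map proj with hN'
    have hstab' : ∀ (g : Γ) (w : Fin n → M), w ∈ N' → (fun i => g • w i) ∈ N' := by
      rintro g w ⟨v, hv, rfl⟩
      exact ⟨fun i => g • v i, hstab g v hv, rfl⟩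
    rcases ih N' hstab' with htop | ⟨c, hc0, hc⟩
    · -- projection is surjective
      set consL : M →+ (Fin (n + 1) → M) :=
        AddMonoidHom.mk' (fun x => (Fin.cons x 0 : Fin (n + 1) → M)) (by
          intro a b; funext i
          cases i using Fin.cases <;> simp) with hconsL
      set L : AddSubgroup M := N.comap consL with hL
      have hLstab : ∀ (g : Γ) (x : M), x ∈ L → g • x ∈ L := by
        intro g x hx
        have h1 := hstab g (Fin.cons x 0) hx
        have h2 : (fun i => g • Fin.cons x (0 : Fin n → M) i) = (Fin.cons (g • x) 0 : Fin (n + 1) → M) := by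
          funext i
          cases i using Fin.cases <;> simp
        rw [h2] at h1
        exact h1
      rcases hsimple L hLstab with hbot | htopL
      · -- graph of a function: extract coefficients
        have uniq : ∀ (x y : M) (u : Fin n → M),
            Fin.cons x u ∈ N → Fin.cons y u ∈ N → x = y := by
          intro x y u h1 h2
          have h3 : Fin.cons x u - Fin.cons y u ∈ N := N.sub_mem h1 h2
          have h4 : Fin.cons x u - Fin.cons y u = (Fin.cons (x - y) 0 : Fin (n + 1) → M) := by
            funext i; cases i using Fin.cases <;> simp
          rw [h4] at h3
          have : x - y ∈ L := h3
          rw [hbot] at this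
          have := AddSubgroup.mem_bot.mp this
          exact sub_eq_zero.mp this
        have exF : ∀ u : Fin n → M, ∃ x, Fin.cons x u ∈ N := by
          intro u
          have hu : u ∈ N' := by rw [htop]; trivial
          obtain ⟨v, hv, hpv⟩ := hu
          refine ⟨v 0, ?_⟩
          have : Fin.cons (v 0) u = v := by
            funext i
            cases i using Fin.cases with
            | zero => simp
            | succ j =>
              have := congrFun hpv j
              simp only [hproj, AddMonoidHom.mk'_apply] at this
              simp [← this]
          rw [this]; exact hv
        choose F hF using exF
        have Fadd : ∀ u u' : Fin n → M, F (u + u') = F u + F u' := by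
          intro u u'
          have h1 : Fin.cons (F u) u + Fin.cons (F u') u'
              = (Fin.cons (F u + F u') (u + u') : Fin (n + 1) → M) := by
            funext i; cases i using Fin.cases <;> simp
          have h2 : (Fin.cons (F u + F u') (u + u') : Fin (n + 1) → M) ∈ N := by
            rw [← h1]; exact N.add_mem (hF u) (hF u')
          exact uniq _ _ _ (hF (u + u')) h2
        have Fequiv : ∀ (g : Γ) (u : Fin n → M), F (fun i => g • u i) = g • F u := by
          intro g u
          have h1 := hstab g (Fin.cons (F u) u) (hF u)
          have h2 : (fun i => g • Fin.cons (F u) u i)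
              = (Fin.cons (g • F u) (fun i => g • u i) : Fin (n + 1) → M) := by
            funext i; cases i using Fin.cases <;> simp
          rw [h2] at h1
          exact uniq _ _ _ (hF _) h1
        set Fhom : (Fin n → M) →+ M := AddMonoidHom.mk' F (fun a b => Fadd a b) with hFhom
        have hce : ∀ i : Fin n, ∃ ci : K, ∀ m : M, F (Pi.single i m) = ci • m := by
          intro i
          obtain ⟨ci, hci⟩ := hend (AddMonoidHom.mk' (fun m => F (Pi.single i m)) (by
            intro a b; show F (Pi.single i (a + b)) = F (Pi.single i a) + F (Pi.single i b); rw [Pi.single_add, Fadd])) (by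
            intro g m
            simp only [AddMonoidHom.mk'_apply]
            have hsg : (Pi.single i (g • m) : Fin n → M) = fun j => g • Pi.single i m j := by
              funext j
              by_cases h : j = i
              · subst h; simp
              · simp [Pi.single_eq_of_ne h]
            rw [hsg, Fequiv])
          exact ⟨ci, fun m => hci m⟩
        choose cc hcc using hce
        right
        refine ⟨Fin.cons (-1) cc, ?_, ?_⟩
        · intro h
          have h0 := congrFun h 0
          simp only [Fin.cons_zero, Pi.zero_apply, neg_eq_zero] at h0
          exact one_ne_zero h0
        · intro v hv
          have hv0 : v 0 = F (fun i : Fin n => v i.succ) := by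
            refine uniq _ _ (fun i : Fin n => v i.succ) ?_ (hF _)
            have hvc : (Fin.cons (v 0) (fun i : Fin n => v i.succ) : Fin (n + 1) → M) = v := by
              funext i; cases i using Fin.cases <;> simp
            rw [hvc]; exact hv
          have hsum : F (fun i : Fin n => v i.succ) = ∑ i, cc i • v i.succ := by
            have hdec : (fun i : Fin n => v i.succ) = ∑ i : Fin n, Pi.single i (v i.succ) :=
              (Finset.univ_sum_single (fun i : Fin n => v i.succ)).symm
            calc F (fun i : Fin n => v i.succ) = Fhom (∑ i : Fin n, Pi.single i (v i.succ)) := by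
                  rw [← hdec]; rfl
              _ = ∑ i : Fin n, Fhom (Pi.single i (v i.succ)) := map_sum _ _ _
              _ = ∑ i, cc i • v i.succ := by
                  refine Finset.sum_congr rfl fun i _ => ?_
                  exact hcc i (v i.succ)
          rw [Fin.sum_univ_succ]
          simp only [Fin.cons_zero, Fin.cons_succ, neg_one_smul]
          rw [hv0, hsum, neg_add_cancel]
      · -- L = ⊤ : N = ⊤
        left
        ext v
        simp only [AddSubgroup.mem_top, iff_true]
        have hu : (fun i : Fin n => v i.succ) ∈ N' := by rw [htop]; trivial
        obtain ⟨w, hw, hpw⟩ := hu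
        have hd : Fin.cons (v 0 - w 0) (0 : Fin n → M) ∈ N := by
          have : v 0 - w 0 ∈ L := by rw [htopL]; trivial
          exact this
        have : v = w + (Fin.cons (v 0 - w 0) 0 : Fin (n + 1) → M) := by
          funext i
          cases i using Fin.cases with
          | zero => simp
          | succ j =>
            have : w j.succ = v j.succ := congrFun hpw j
            simp [this]
        rw [this]
        exact N.add_mem hw hd
    · -- pad coefficients with 0
      right
      refine ⟨Fin.cons 0 c, ?_, ?_⟩
      · obtain ⟨i, hi⟩ := Function.ne_iff.mp hc0
        intro h
        apply hi
        have := congrFun h i.succ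
        simpa using this
      · intro v hv
        rw [Fin.sum_univ_succ]
        simp only [Fin.cons_zero, Fin.cons_succ, zero_smul, zero_add]
        exact hc (fun i : Fin n => v i.succ) ⟨v, hv, rfl⟩

/-- Let `Γ` be a profinite group, `M` a finite discrete `Γ`-module with
`pM = 0` (encoded: a module over a finite field `K` of characteristic `p`),
`κ = ker(Γ → Aut M)`, `G = Γ/κ` finite.  Assume `M` is a simple `G`-module,
`H¹(G, M) = 0` (every continuous cocycle vanishing on `κ` is a coboundary),
and `End_G(M) = K`.  If continuous cocycles `α₁, …, αₙ : Γ → M` represent classes that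
are `K`-linearly independent in `H¹(Γ, M)`, then the restriction map
`κ → Mⁿ`, `γ ↦ (α₁ γ, …, αₙ γ)`, is surjective. -/
theorem stmt7 (p : ℕ) (hp : p.Prime)
    (Γ : Type*) [Group Γ] [TopologicalSpace Γ] [IsTopologicalGroup Γ]
    [CompactSpace Γ] [TotallyDisconnectedSpace Γ]
    (M : Type*) [AddCommGroup M] [Finite M] [TopologicalSpace M] [DiscreteTopology M]
    [DistribMulAction Γ M]
    (K : Type*) [Field K] [Fintype K] (hchar : CharP K p)
    [Module K M] [SMulCommClass Γ K M]
    (κ : Subgroup Γ) (hκ : ∀ γ : Γ, γ ∈ κ ↔ ∀ x : M, γ • x = x)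
    [Finite (Γ ⧸ κ)]
    (hsimple : ∀ N : AddSubgroup M, (∀ (g : Γ) (x : M), x ∈ N → g • x ∈ N) → N = ⊥ ∨ N = ⊤)
    (hMnt : Nontrivial M)
    (hend : ∀ f : M →+ M, (∀ (g : Γ) (x : M), f (g • x) = g • f x) → ∃ c : K, ∀ x, f x = c • x)
    (hH1 : ∀ c : Γ → M, Continuous c → (∀ g h, c (g * h) = c g + g • c h) →
      (∀ γ ∈ κ, c γ = 0) → ∃ x : M, ∀ γ, c γ = γ • x - x)
    (n : ℕ) (α : Fin n → Γ → M)
    (hcoc : ∀ i, ∀ g h, α i (g * h) = α i g + g • α i h)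
    (hcont : ∀ i, Continuous (α i))
    (hindep : ∀ coef : Fin n → K,
      (∃ x : M, ∀ γ, ∑ i, coef i • α i γ = γ • x - x) → ∀ i, coef i = 0) :
    ∀ v : Fin n → M, ∃ γ ∈ κ, ∀ i, α i γ = v i := by
  have htriv : ∀ γ ∈ κ, ∀ x : M, γ • x = x := fun γ h => (hκ γ).mp h
  have hα1 : ∀ i, α i 1 = 0 := by
    intro i
    have h := hcoc i 1 1
    rw [one_mul, one_smul] at h
    exact left_eq_add.mp h
  have hαadd : ∀ i, ∀ γ ∈ κ, ∀ δ : Γ, α i (γ * δ) = α i γ + α i δ := by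
    intro i γ hγ δ
    rw [hcoc i γ δ, htriv γ hγ]
  have hαinv : ∀ i, ∀ γ ∈ κ, α i γ⁻¹ = -α i γ := by
    intro i γ hγ
    have h := hαadd i γ hγ γ⁻¹
    rw [mul_inv_cancel, hα1 i] at h
    exact eq_neg_of_add_eq_zero_right h.symm
  have hconjmem : ∀ (g γ : Γ), γ ∈ κ → g * γ * g⁻¹ ∈ κ := by
    intro g γ hγ
    rw [hκ]
    intro x
    rw [mul_smul, mul_smul, htriv γ hγ, smul_inv_smul]
  have hconj : ∀ i (g γ : Γ), γ ∈ κ → α i (g * γ * g⁻¹) = g • α i γ := by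
    intro i g γ hγ
    have key : (g * γ * g⁻¹) * g = g * γ := by group
    have h1 : α i ((g * γ * g⁻¹) * g) = α i (g * γ * g⁻¹) + α i g := by
      rw [hcoc, htriv _ (hconjmem g γ hγ)]
    have h2 : α i (g * γ) = α i g + g • α i γ := hcoc i g γ
    rw [key, h2] at h1
    have h3 := h1.symm
    rw [add_comm (α i (g * γ * g⁻¹)) (α i g)] at h3
    exact add_left_cancel h3
  set N : AddSubgroup (Fin n → M) :=
    { carrier := {v | ∃ γ ∈ κ, ∀ i, α i γ = v i}
      zero_mem' := ⟨1, κ.one_mem, fun i => by simp [hα1 i]⟩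
      add_mem' := by
        rintro a b ⟨γ, hγ, hγa⟩ ⟨δ, hδ, hδb⟩
        exact ⟨γ * δ, κ.mul_mem hγ hδ, fun i => by
          rw [hαadd i γ hγ δ, hγa i, hδb i]; rfl⟩
      neg_mem' := by
        rintro a ⟨γ, hγ, hγa⟩
        exact ⟨γ⁻¹, κ.inv_mem hγ, fun i => by
          rw [hαinv i γ hγ, hγa i]; rfl⟩ } with hN
  have hstab : ∀ (g : Γ) (v : Fin n → M), v ∈ N → (fun i => g • v i) ∈ N := by
    rintro g v ⟨γ, hγ, hγv⟩
    exact ⟨g * γ * g⁻¹, hconjmem g γ hγ, fun i => by rw [hconj i g γ hγ, hγv i]⟩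
  rcases stmt7_aux Γ M K hsimple hend n N hstab with htop | ⟨c, hc0, hc⟩
  · intro v
    have hv : v ∈ N := by rw [htop]; trivial
    exact hv
  · exfalso
    have hvan : ∀ γ ∈ κ, ∑ i, c i • α i γ = 0 := fun γ hγ =>
      hc (fun i => α i γ) ⟨γ, hγ, fun i => rfl⟩
    have hβcoc : ∀ g h : Γ,
        (∑ i, c i • α i (g * h)) = (∑ i, c i • α i g) + g • ∑ i, c i • α i h := by
      intro g h
      simp only [hcoc, smul_add]
      rw [Finset.sum_add_distrib, Finset.smul_sum]
      congr 1
      exact Finset.sum_congr rfl fun i _ => (smul_comm g (c i) (α i h)).symm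
    have hβcont : Continuous fun γ => ∑ i, c i • α i γ := by
      haveI : ContinuousAdd M := ⟨continuous_of_discreteTopology⟩
      exact continuous_finset_sum _ fun i _ =>
        (continuous_of_discreteTopology (f := fun m : M => c i • m)).comp (hcont i)
    obtain ⟨x, hx⟩ := hH1 _ hβcont hβcoc hvan
    exact hc0 (funext (hindep c ⟨x, hx⟩))
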